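/- There exists a constant C > 0 such that for every γ ∈ (0, 1]: ∫₀^∞ x · ( (3/2 − x²)² + 6x²·cos²γ )^{1/2} · ( (1 − x²)² + 4x²·sin²γ )^{−3/2} dx ≤ C · γ^{−2}. -/

import Mathlib

set_option maxHeartbeats 1000000

open Real MeasureTheory Set Filter Topology

private lemma sqrt_cube {e : ℝ} (he : 0 ≤ e) : Real.sqrt (e ^ 3) = Real.sqrt e ^ 3 := by
  have h1 : e ^ 3 = e ^ 2 * e := by ring
  rw [h1, Real.sqrt_mul (sq_nonneg e), Real.sqrt_sq he]
  have h2 : Real.sqrt e ^ 3 = Real.sqrt e ^ 2 * Real.sqrt e := by ring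
  rw [h2, Real.sq_sqrt he]

private lemma rpow_neg_three_half {t : ℝ} (ht : 0 < t) :
    t ^ (-(3 / 2 : ℝ)) = 1 / Real.sqrt t ^ 3 := by
  rw [Real.rpow_neg ht.le, ← Real.rpow_natCast (Real.sqrt t) 3, Real.sqrt_eq_rpow,
    ← Real.rpow_mul ht.le]
  norm_num

private lemma hasDerivAt_F (b : ℝ) (hb : 0 < b) (x : ℝ) :
    HasDerivAt (fun y => (y - 1) / Real.sqrt ((y - 1) ^ 2 + b))
      (b / Real.sqrt ((x - 1) ^ 2 + b) ^ 3) x := by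
  have hpos : 0 < (x - 1) ^ 2 + b := by positivity
  have hs : 0 < Real.sqrt ((x - 1) ^ 2 + b) := Real.sqrt_pos.mpr hpos
  have h1 : HasDerivAt (fun y : ℝ => (y - 1) ^ 2 + b) (2 * (x - 1)) x := by
    simpa using (((hasDerivAt_id x).sub_const 1).pow 2).add_const b
  have h2 : HasDerivAt (fun y => Real.sqrt ((y - 1) ^ 2 + b))
      (2 * (x - 1) / (2 * Real.sqrt ((x - 1) ^ 2 + b))) x := h1.sqrt hpos.ne'
  have h3 : HasDerivAt (fun y : ℝ => y - 1) 1 x := (hasDerivAt_id x).sub_const 1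
  have h4 : HasDerivAt (fun y => (y - 1) / Real.sqrt ((y - 1) ^ 2 + b)) _ x := h3.div h2 hs.ne'
  convert h4 using 1
  have hsq : Real.sqrt ((x - 1) ^ 2 + b) ^ 2 = (x - 1) ^ 2 + b := Real.sq_sqrt hpos.le
  have ht := hs.ne'
  field_simp
  linear_combination (-1 : ℝ) * hsq

private lemma tendsto_F (b : ℝ) (hb : 0 < b) :
    Tendsto (fun y : ℝ => (y - 1) / Real.sqrt ((y - 1) ^ 2 + b)) atTop (𝓝 1) := by
  have h0 : Tendsto (fun y : ℝ => (y - 1) ^ 2 + b) atTop atTop := by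
    apply tendsto_atTop_mono' atTop _ tendsto_id
    filter_upwards [eventually_ge_atTop (3 : ℝ)] with y hy
    simp only [id_eq]
    nlinarith
  have h1 : Tendsto (fun y : ℝ => b / ((y - 1) ^ 2 + b)) atTop (𝓝 0) :=
    Tendsto.div_atTop tendsto_const_nhds h0
  have h2 : Tendsto (fun y : ℝ => Real.sqrt (1 - b / ((y - 1) ^ 2 + b))) atTop (𝓝 1) := by
    have := ((tendsto_const_nhds (x := (1:ℝ)) (f := atTop)).sub h1).sqrt
    simpa using this
  apply h2.congr'
  filter_upwards [Filter.eventually_ge_atTop (2 : ℝ)] with y hy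
  have hy1 : (0:ℝ) ≤ y - 1 := by linarith
  have hpos : 0 < (y - 1) ^ 2 + b := by positivity
  have h3 : 1 - b / ((y - 1) ^ 2 + b) = (y - 1) ^ 2 / ((y - 1) ^ 2 + b) := by
    field_simp
    ring
  rw [h3, Real.sqrt_div (sq_nonneg _), Real.sqrt_sq hy1]

private lemma key_integral (b : ℝ) (hb : 0 < b) :
    IntegrableOn (fun y : ℝ => 60 / Real.sqrt ((y - 1) ^ 2 + b) ^ 3) (Ioi 0) ∧
      ∫ y in Ioi (0:ℝ), 60 / Real.sqrt ((y - 1) ^ 2 + b) ^ 3 ≤ 120 / b := by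
  set g : ℝ → ℝ := fun y => 60 / Real.sqrt ((y - 1) ^ 2 + b) ^ 3 with hg
  set F : ℝ → ℝ := fun y => (60 / b) * ((y - 1) / Real.sqrt ((y - 1) ^ 2 + b)) with hF
  have hspos : ∀ x : ℝ, 0 < Real.sqrt ((x - 1) ^ 2 + b) := fun x =>
    Real.sqrt_pos.mpr (by positivity)
  have hder : ∀ x : ℝ, HasDerivAt F (g x) x := by
    intro x
    have h := (hasDerivAt_F b hb x).const_mul (60 / b)
    have heq : 60 / b * (b / Real.sqrt ((x - 1) ^ 2 + b) ^ 3)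
        = 60 / Real.sqrt ((x - 1) ^ 2 + b) ^ 3 := by
      rw [div_mul_div_comm, mul_comm (60:ℝ) b, mul_div_mul_left _ _ hb.ne']
    simp only [hg]
    rw [← heq]
    exact h
  have htend : Tendsto F atTop (𝓝 (60 / b)) := by
    have := (tendsto_F b hb).const_mul (60 / b)
    simpa using this
  have hgnn : ∀ x : ℝ, 0 ≤ g x := fun x => by
    have := (hspos x).le; simp only [hg]; positivity
  have hgc : Continuous g := by
    apply Continuous.div continuous_const
    · exact (Real.continuous_sqrt.comp (by continuity)).pow 3
    · intro x; exact pow_ne_zero _ (hspos x).ne'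
  have hint1 : IntegrableOn g (Ioi 1) :=
    integrableOn_Ioi_deriv_of_nonneg' (fun x _ => hder x) (fun x _ => hgnn x) htend
  have hint2 : IntegrableOn g (Ioc 0 1) := hgc.integrableOn_Ioc
  have hval1 : ∫ y in Ioi (1:ℝ), g y = 60 / b - F 1 :=
    integral_Ioi_of_hasDerivAt_of_tendsto (hder 1).continuousAt.continuousWithinAt
      (fun x _ => hder x) hint1 htend
  have hF1 : F 1 = 0 := by simp [hF]
  have hval2 : ∫ y in Ioc (0:ℝ) 1, g y = F 1 - F 0 := by
    rw [← intervalIntegral.integral_of_le zero_le_one]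
    exact intervalIntegral.integral_eq_sub_of_hasDerivAt (fun x _ => hder x)
      (hgc.intervalIntegrable 0 1)
  have ht1 : (1:ℝ) ≤ Real.sqrt (((0:ℝ) - 1) ^ 2 + b) := by
    have h := Real.sqrt_le_sqrt (show (1:ℝ) ≤ ((0:ℝ) - 1) ^ 2 + b by nlinarith)
    rwa [Real.sqrt_one] at h
  have ht0 : (0:ℝ) < Real.sqrt (((0:ℝ) - 1) ^ 2 + b) := hspos 0
  have hF0v : F 0 = -(60 / b * (1 / Real.sqrt (((0:ℝ) - 1) ^ 2 + b))) := by
    rw [hF]; ring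
  have hIoc : ∫ y in Ioc (0:ℝ) 1, g y ≤ 60 / b := by
    rw [hval2, hF1, hF0v]
    have hd1 : 1 / Real.sqrt (((0:ℝ) - 1) ^ 2 + b) ≤ 1 := by
      rw [div_le_one ht0]; exact ht1
    have := mul_le_mul_of_nonneg_left hd1 (by positivity : (0:ℝ) ≤ 60 / b)
    simpa using this
  have hunion : Ioc (0:ℝ) 1 ∪ Ioi 1 = Ioi 0 := Ioc_union_Ioi_eq_Ioi zero_le_one
  constructor
  · rw [← hunion]; exact hint2.union hint1
  · rw [← hunion, setIntegral_union (Ioc_disjoint_Ioi le_rfl) measurableSet_Ioi hint2 hint1]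
    have h1 : ∫ y in Ioi (1:ℝ), g y = 60 / b := by rw [hval1, hF1]; ring
    have h2 : (120:ℝ) / b = 60 / b + 60 / b := by ring
    linarith

private lemma poly_bound (x s c : ℝ) (hx : 0 < x) (hc : c ^ 2 = 1 - s ^ 2)
    (hs1 : s ^ 2 ≤ 1) :
    x ^ 2 * ((3 / 2 - x ^ 2) ^ 2 + 6 * x ^ 2 * c ^ 2) * ((x - 1) ^ 2 + 2 * s ^ 2) ^ 3
      ≤ 3600 * ((1 - x ^ 2) ^ 2 + 4 * x ^ 2 * s ^ 2) ^ 3 := by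
  have hs0 : 0 ≤ s ^ 2 := sq_nonneg s
  set σ := s ^ 2 with hσ
  set E := (x - 1) ^ 2 + 2 * σ with hE
  set D := (1 - x ^ 2) ^ 2 + 4 * x ^ 2 * σ with hD
  clear_value σ E D
  have hEnn : 0 ≤ E := by rw [hE]; positivity
  have hDnn : 0 ≤ D := by rw [hD]; positivity
  have hN : (3 / 2 - x ^ 2) ^ 2 + 6 * x ^ 2 * c ^ 2 ≤ (x ^ 2 + 3 / 2) ^ 2 := by
    rw [hc]; nlinarith [mul_nonneg (sq_nonneg x) hs0]
  have hstep : x ^ 2 * ((3 / 2 - x ^ 2) ^ 2 + 6 * x ^ 2 * c ^ 2) * E ^ 3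
      ≤ x ^ 2 * (x ^ 2 + 3 / 2) ^ 2 * E ^ 3 := by
    apply mul_le_mul_of_nonneg_right _ (pow_nonneg hEnn 3)
    exact mul_le_mul_of_nonneg_left hN (sq_nonneg x)
  refine hstep.trans ?_
  rcases le_or_gt (x ^ 2) (1 / 2) with h1 | h1
  · -- small x
    have hxle : x ≤ 1 := by nlinarith
    have hE3 : E ≤ 3 := by rw [hE]; nlinarith
    have hD4 : (1:ℝ) / 4 ≤ D := by rw [hD]; nlinarith [mul_nonneg (sq_nonneg x) hs0]
    have hsq4 : (x ^ 2 + 3 / 2) ^ 2 ≤ 4 := by nlinarith [sq_nonneg x]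
    have hP : x ^ 2 * (x ^ 2 + 3 / 2) ^ 2 ≤ 2 := by nlinarith [sq_nonneg x, sq_nonneg (x^2 + 3/2)]
    have hEc : E ^ 3 ≤ 27 := by
      have := pow_le_pow_left₀ hEnn hE3 3
      norm_num at this; linarith
    have hDc : (1:ℝ) / 64 ≤ D ^ 3 := by
      have := pow_le_pow_left₀ (by norm_num : (0:ℝ) ≤ 1/4) hD4 3
      norm_num at this; linarith
    calc x ^ 2 * (x ^ 2 + 3 / 2) ^ 2 * E ^ 3 ≤ 2 * 27 :=
          mul_le_mul hP hEc (pow_nonneg hEnn 3) (by norm_num)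
      _ ≤ 3600 * D ^ 3 := by linarith
  rcases le_or_gt 2 (x ^ 2) with h2 | h2
  · -- large x
    have hx1 : 1 ≤ x := by nlinarith
    have hExx : E ≤ 2 * x ^ 2 := by rw [hE]; nlinarith
    have ha : x ^ 2 + 3 / 2 ≤ 7 / 4 * x ^ 2 := by linarith
    have hb2 : (x ^ 2 + 3 / 2) ^ 2 ≤ (7 / 4 * x ^ 2) ^ 2 :=
      pow_le_pow_left₀ (by positivity) ha 2
    have hP : x ^ 2 * (x ^ 2 + 3 / 2) ^ 2 ≤ 49 / 16 * x ^ 6 := by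
      have := mul_le_mul_of_nonneg_left hb2 (sq_nonneg x)
      nlinarith [this]
    have hDx : x ^ 4 / 4 ≤ D := by rw [hD]; nlinarith [mul_nonneg (sq_nonneg x) hs0]
    have hEc : E ^ 3 ≤ 8 * x ^ 6 := by
      have h := pow_le_pow_left₀ hEnn hExx 3
      nlinarith [h]
    have hDc : x ^ 12 / 64 ≤ D ^ 3 := by
      have h := pow_le_pow_left₀ (by positivity : (0:ℝ) ≤ x ^ 4 / 4) hDx 3
      nlinarith [h]
    calc x ^ 2 * (x ^ 2 + 3 / 2) ^ 2 * E ^ 3 ≤ (49 / 16 * x ^ 6) * (8 * x ^ 6) :=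
          mul_le_mul hP hEc (pow_nonneg hEnn 3) (by positivity)
      _ = 49 / 2 * x ^ 12 := by ring
      _ ≤ 3600 * (x ^ 12 / 64) := by nlinarith [pow_nonneg hx.le 12]
      _ ≤ 3600 * D ^ 3 := by linarith
  · -- middle x
    have hxx : (0:ℝ) ≤ x ^ 2 + 2 * x := by positivity
    have hED : E ≤ D := by
      rw [hE, hD]
      nlinarith [mul_nonneg (sq_nonneg (x - 1)) hxx,
        mul_nonneg (by linarith : (0:ℝ) ≤ 4 * x ^ 2 - 2) hs0]
    have hP : x ^ 2 * (x ^ 2 + 3 / 2) ^ 2 ≤ 25 := by nlinarith [sq_nonneg x]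
    have hEc : E ^ 3 ≤ D ^ 3 := pow_le_pow_left₀ hEnn hED 3
    calc x ^ 2 * (x ^ 2 + 3 / 2) ^ 2 * E ^ 3 ≤ 25 * D ^ 3 :=
          mul_le_mul hP hEc (pow_nonneg hEnn 3) (by norm_num)
      _ ≤ 3600 * D ^ 3 := by nlinarith [pow_nonneg hDnn 3]

private lemma pointwise_bound (γ x : ℝ) (hγ : γ ∈ Set.Ioc (0:ℝ) 1) (hx : 0 < x) :
    x * Real.sqrt ((3 / 2 - x ^ 2) ^ 2 + 6 * x ^ 2 * (Real.cos γ) ^ 2)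
        * ((1 - x ^ 2) ^ 2 + 4 * x ^ 2 * (Real.sin γ) ^ 2) ^ (-(3 / 2 : ℝ))
      ≤ 60 / Real.sqrt ((x - 1) ^ 2 + 2 * (Real.sin γ) ^ 2) ^ 3 := by
  have hsin : 0 < Real.sin γ := Real.sin_pos_of_pos_of_lt_pi hγ.1
    (lt_of_le_of_lt hγ.2 (by linarith [Real.pi_gt_three]))
  set s := Real.sin γ with hs
  set c := Real.cos γ with hcdef
  set N := (3 / 2 - x ^ 2) ^ 2 + 6 * x ^ 2 * c ^ 2 with hNdef
  set D := (1 - x ^ 2) ^ 2 + 4 * x ^ 2 * s ^ 2 with hDdef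
  set E := (x - 1) ^ 2 + 2 * s ^ 2 with hEdef
  have hD : 0 < D := by positivity
  have hEpos : 0 < E := by positivity
  have hNnn : 0 ≤ N := by positivity
  have hsD : 0 < Real.sqrt D := Real.sqrt_pos.mpr hD
  have hsE : 0 < Real.sqrt E := Real.sqrt_pos.mpr hEpos
  rw [rpow_neg_three_half hD, mul_one_div, div_le_div_iff₀ (by positivity) (by positivity)]
  have key : x ^ 2 * N * E ^ 3 ≤ 3600 * D ^ 3 := by
    refine poly_bound x s c hx ?_ ?_
    · rw [hcdef, hs]; nlinarith [Real.sin_sq_add_cos_sq γ]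
    · rw [hs]; nlinarith [Real.sin_le_one γ, hsin]
  have h1 : x * Real.sqrt N * Real.sqrt E ^ 3 = Real.sqrt (x ^ 2 * N * E ^ 3) := by
    rw [Real.sqrt_mul (by positivity), Real.sqrt_mul (sq_nonneg x), Real.sqrt_sq hx.le,
      sqrt_cube hEpos.le, mul_assoc]
  have h2 : (60 : ℝ) * Real.sqrt D ^ 3 = Real.sqrt (3600 * D ^ 3) := by
    rw [Real.sqrt_mul (by norm_num), sqrt_cube hD.le,
      show Real.sqrt 3600 = 60 by
        rw [show (3600:ℝ) = 60 ^ 2 by norm_num, Real.sqrt_sq (by norm_num)]]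
  rw [h1, h2]
  exact Real.sqrt_le_sqrt key

theorem integral_bound_gamma :
    ∃ C : ℝ, 0 < C ∧ ∀ γ : ℝ, γ ∈ Set.Ioc (0 : ℝ) 1 →
      ∫ x in Set.Ioi (0 : ℝ),
          x * Real.sqrt ((3 / 2 - x ^ 2) ^ 2 + 6 * x ^ 2 * (Real.cos γ) ^ 2)
            * ((1 - x ^ 2) ^ 2 + 4 * x ^ 2 * (Real.sin γ) ^ 2) ^ (-(3 / 2 : ℝ))
        ≤ C * γ ^ (-(2 : ℝ)) := by
  refine ⟨120, by norm_num, fun γ hγ => ?_⟩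
  have hγ0 := hγ.1
  have hγ1 := hγ.2
  have hsin : 0 < Real.sin γ := Real.sin_pos_of_pos_of_lt_pi hγ0
    (lt_of_le_of_lt hγ1 (by linarith [Real.pi_gt_three]))
  obtain ⟨hint, hval⟩ := key_integral (2 * (Real.sin γ) ^ 2) (by positivity)
  have step1 : ∫ x in Set.Ioi (0 : ℝ),
      x * Real.sqrt ((3 / 2 - x ^ 2) ^ 2 + 6 * x ^ 2 * (Real.cos γ) ^ 2)
        * ((1 - x ^ 2) ^ 2 + 4 * x ^ 2 * (Real.sin γ) ^ 2) ^ (-(3 / 2 : ℝ))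
      ≤ ∫ y in Set.Ioi (0:ℝ), 60 / Real.sqrt ((y - 1) ^ 2 + 2 * (Real.sin γ) ^ 2) ^ 3 := by
    apply integral_mono_of_nonneg
    · rw [EventuallyLE, ae_restrict_iff' measurableSet_Ioi]
      apply ae_of_all
      intro x hx
      have hx' : (0:ℝ) < x := hx
      positivity
    · exact hint
    · rw [EventuallyLE, ae_restrict_iff' measurableSet_Ioi]
      apply ae_of_all
      intro x hx
      exact pointwise_bound γ x hγ hx
  have step2 : (120:ℝ) / (2 * (Real.sin γ) ^ 2) ≤ 120 * γ ^ (-(2 : ℝ)) := by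
    have hrp : γ ^ (-(2 : ℝ)) = 1 / γ ^ 2 := by
      rw [Real.rpow_neg hγ0.le, one_div, show ((2:ℝ)) = ((2:ℕ):ℝ) by norm_num,
        Real.rpow_natCast]
    rw [hrp, mul_one_div]
    have hsin34 : 3 / 4 * γ ≤ Real.sin γ := by
      have := Real.sin_gt_sub_cube hγ0
      nlinarith
    rw [div_le_div_iff₀ (by positivity) (by positivity)]
    nlinarith [mul_le_mul hsin34 hsin34 (by positivity) hsin.le]
  calc _ ≤ ∫ y in Set.Ioi (0:ℝ), 60 / Real.sqrt ((y - 1) ^ 2 + 2 * (Real.sin γ) ^ 2) ^ 3 :=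
        step1
    _ ≤ 120 / (2 * (Real.sin γ) ^ 2) := hval
    _ ≤ 120 * γ ^ (-(2 : ℝ)) := step2
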